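/- Let k be a prime and let T be a nontrivial finite group containing no element of order k. In the direct power T^k (functions from {0,…,k−1} to T), let D = {(t,t,…,t) : t ∈ T} be the diagonal subgroup, and let σ be the cyclic-shift automorphism of T^k sending (t₁,…,t_k) to (t_k,t₁,…,t_{k−1}). Then σ maps D to D, and the induced permutation of the set of right cosets {D·t : t ∈ T^k} is quasi-semiregular of order k with unique fixed point the coset D itself. -/

import Mathlib

/-- The straight diagonal subgroup `D = {(t,…,t) : t ∈ T}` of the direct power `T^k`. -/
def diagonalSubgroup (k : ℕ) (T : Type*) [Group T] : Subgroup (Fin k → T) :=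
  (MonoidHom.mk' (fun t => fun _ => t) (fun _ _ => rfl)).range

lemma mem_diagonalSubgroup_iff {k : ℕ} {T : Type*} [Group T] {f : Fin k → T} :
    f ∈ diagonalSubgroup k T ↔ ∃ c, ∀ i, f i = c := by
  constructor
  · rintro ⟨c, rfl⟩
    exact ⟨c, fun i => rfl⟩
  · rintro ⟨c, hc⟩
    exact ⟨c, by funext i; exact (hc i).symm⟩

lemma fix_zpow {X : Type*} (e : Equiv.Perm X) (x : X) (h : e x = x) :
    ∀ v : ℤ, (e ^ v) x = x := by
  have hinv : e⁻¹ x = x := by conv_lhs => rw [← h]; rw [Equiv.Perm.inv_def, Equiv.symm_apply_apply]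
  intro v
  induction v using Int.induction_on with
  | zero => simp
  | succ n ih => rw [zpow_add_one, Equiv.Perm.mul_apply, h, ih]
  | pred n ih => rw [zpow_sub_one, Equiv.Perm.mul_apply, hinv, ih]

theorem stmt12 {k : ℕ} (hk : k.Prime) (T : Type*) [Group T] [Finite T] [Nontrivial T]
    (hnok : ∀ t : T, orderOf t ≠ k) :
    (∀ f ∈ diagonalSubgroup k T,
        (fun i => f ((finRotate k).symm i)) ∈ diagonalSubgroup k T) ∧
    ∃ π : Equiv.Perm (Quotient (QuotientGroup.rightRel (diagonalSubgroup k T))),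
      (∀ t : Fin k → T,
        π (Quotient.mk (QuotientGroup.rightRel (diagonalSubgroup k T)) t) =
          Quotient.mk (QuotientGroup.rightRel (diagonalSubgroup k T))
            (fun i => t ((finRotate k).symm i))) ∧
      orderOf π = k ∧
      (∀ B, π B = B ↔
        B = Quotient.mk (QuotientGroup.rightRel (diagonalSubgroup k T)) 1) ∧
      ∀ (n : ℤ) (B),
        B ≠ Quotient.mk (QuotientGroup.rightRel (diagonalSubgroup k T)) 1 →
        (π ^ n) B = B → π ^ n = 1 := by
  haveI : NeZero k := ⟨hk.pos.ne'⟩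
  haveI : Fact k.Prime := ⟨hk⟩
  set D := diagonalSubgroup k T with hD
  set S := QuotientGroup.rightRel D with hS
  -- the rotation on coordinates
  have hsub : ∀ i : Fin k, (finRotate k).symm i = i - 1 := by
    rcases k with _ | m
    · exact absurd hk (by norm_num)
    · intro i
      rw [Equiv.symm_apply_eq, finRotate_succ_apply, sub_add_cancel]
  -- first conjunct
  have hdiag : ∀ f ∈ D, (fun i => f ((finRotate k).symm i)) ∈ D := by
    intro f hf
    obtain ⟨c, hc⟩ := mem_diagonalSubgroup_iff.mp hf
    exact mem_diagonalSubgroup_iff.mpr ⟨c, fun i => hc _⟩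
  refine ⟨hdiag, ?_⟩
  -- the permutation of T^k
  set φ : Equiv.Perm (Fin k → T) := (finRotate k).arrowCongr (Equiv.refl T) with hφ
  have hφ_apply : ∀ (t : Fin k → T), φ t = fun i => t ((finRotate k).symm i) := fun t => rfl
  have hφD : ∀ g : Fin k → T, g ∈ D ↔ φ g ∈ D := by
    intro g
    constructor
    · exact fun h => hdiag g h
    · intro h
      obtain ⟨c, hc⟩ := mem_diagonalSubgroup_iff.mp h
      refine mem_diagonalSubgroup_iff.mpr ⟨c, fun i => ?_⟩
      have := hc (finRotate k i)
      rw [hφ_apply] at this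
      simpa using this
  have hcongr : ∀ a b : Fin k → T, S a b ↔ S (φ a) (φ b) := by
    intro a b
    rw [hS, QuotientGroup.rightRel_apply, QuotientGroup.rightRel_apply]
    have : φ b * (φ a)⁻¹ = φ (b * a⁻¹) := rfl
    rw [this, ← hφD]
  set π : Equiv.Perm (Quotient S) := Quotient.congr φ hcongr with hπdef
  have hmk : ∀ t : Fin k → T, π (Quotient.mk S t) = Quotient.mk S (φ t) := fun t => rfl
  have hπ1 : ∀ t : Fin k → T,
      π (Quotient.mk S t) = Quotient.mk S (fun i => t (i - 1)) := by
    intro t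
    rw [hmk, hφ_apply]
    exact congrArg _ (funext fun i => congrArg t (hsub i))
  open Fin.CommRing in
  have hpow : ∀ (m : ℕ) (t : Fin k → T),
      (π ^ m) (Quotient.mk S t) = Quotient.mk S (fun i => t (i - (m : Fin k))) := by
    intro m
    induction m with
    | zero =>
      intro t
      simp only [pow_zero, Equiv.Perm.coe_one, id_eq, Nat.cast_zero, sub_zero]
    | succ m ih =>
      intro t
      rw [pow_succ, Equiv.Perm.mul_apply, hπ1, ih]
      refine congrArg _ (funext fun i => congrArg t ?_)
      push_cast
      ring
  open Fin.CommRing in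
  have hπk : π ^ k = 1 := by
    ext B
    induction B using Quotient.ind with
    | _ t =>
      rw [hpow k t]
      simp only [Fin.natCast_self, sub_zero, Equiv.Perm.coe_one, id_eq]
  have hmk_one : ∀ t : Fin k → T,
      Quotient.mk S t = Quotient.mk S 1 ↔ t ∈ D := by
    intro t
    constructor
    · intro h
      have h2 : (1 : Fin k → T) * t⁻¹ ∈ D :=
        QuotientGroup.rightRel_apply.mp (Quotient.exact h)
      simpa using D.inv_mem_iff.mp (by simpa using h2)
    · intro h
      exact Quotient.sound (QuotientGroup.rightRel_apply.mpr (by simpa using D.inv_mem h))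
  open Fin.CommRing in
  have hfix : ∀ B, π B = B ↔ B = Quotient.mk S 1 := by
    intro B
    induction B using Quotient.ind with
    | _ t =>
      rw [hmk_one]
      constructor
      · intro h
        rw [hπ1] at h
        have hrel : t * (fun i => t (i - 1))⁻¹ ∈ D :=
          QuotientGroup.rightRel_apply.mp (Quotient.exact h)
        obtain ⟨c, hc⟩ := mem_diagonalSubgroup_iff.mp hrel
        have hstep : ∀ i, t i = c * t (i - 1) := by
          intro i
          have := hc i
          simp only [Pi.mul_apply, Pi.inv_apply] at this
          rw [← this, mul_assoc, inv_mul_cancel, mul_one]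
        have key : ∀ (m : ℕ) (i : Fin k), t (i + (m : Fin k)) = c ^ m * t i := by
          intro m
          induction m with
          | zero => intro i; simp
          | succ m ih =>
            intro i
            have h1 : i + ((m + 1 : ℕ) : Fin k) = (i + (m : Fin k)) + 1 := by
              push_cast; ring
            rw [h1, hstep ((i + (m : Fin k)) + 1), add_sub_cancel_right, ih,
              pow_succ', mul_assoc]
        have hck : c ^ k = 1 := by
          have := key k 0
          rw [Fin.natCast_self, add_zero] at this
          exact (right_eq_mul.mp this)
        have hc1 : c = 1 := by
          have hd := orderOf_dvd_of_pow_eq_one hck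
          rcases (hk.eq_one_or_self_of_dvd _ hd) with h1 | h1
          · exact orderOf_eq_one_iff.mp h1
          · exact absurd h1 (hnok c)
        refine mem_diagonalSubgroup_iff.mpr ⟨t 0, fun j => ?_⟩
        have := key j.val 0
        rw [hc1, one_pow, one_mul, zero_add, Fin.cast_val_eq_self] at this
        exact this
      · intro h
        obtain ⟨c, hc⟩ := mem_diagonalSubgroup_iff.mp h
        rw [hπ1]
        exact congrArg _ (funext fun i => by rw [hc, hc])
  have hπne : π ≠ 1 := by
    intro h1
    obtain ⟨a, ha⟩ := exists_ne (1 : T)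
    have h10 : (1 : Fin k) ≠ 0 := by
      have h2 := hk.two_le
      intro hcontra
      have := congrArg Fin.val hcontra
      rw [Fin.val_one', Fin.val_zero, Nat.mod_eq_of_lt h2] at this
      omega
    set t : Fin k → T := fun i => if i = 0 then a else 1 with ht
    have : π (Quotient.mk S t) = Quotient.mk S t := by rw [h1]; rfl
    have hmem := (hmk_one t).mp ((hfix _).mp this)
    obtain ⟨c, hc⟩ := mem_diagonalSubgroup_iff.mp hmem
    have e0 : t 0 = a := by simp [ht]
    have e1 : t 1 = 1 := by simp [ht, h10]
    exact ha (by rw [← e0, hc 0, ← hc 1, e1])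
  have horder : orderOf π = k := orderOf_eq_prime hπk hπne
  refine ⟨π, fun t => hmk t, horder, hfix, ?_⟩
  intro n B hB hfixB
  by_contra hne
  have hπkz : π ^ (k : ℤ) = 1 := by rw [zpow_natCast, hπk]
  have hknd : ¬ (k : ℤ) ∣ n := by
    rintro ⟨d, rfl⟩
    exact hne (by rw [zpow_mul, hπkz, one_zpow])
  have hcop : IsCoprime (k : ℤ) n := by
    rw [Int.isCoprime_iff_gcd_eq_one]
    have : ¬ k ∣ n.natAbs := by
      intro h
      exact hknd (Int.dvd_natAbs.mp (Int.natCast_dvd_natCast.mpr h))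
    have := (hk.coprime_iff_not_dvd).mpr this
    simpa [Int.gcd] using this
  obtain ⟨u, v, huv⟩ := hcop
  have hπeq : (π ^ n) ^ v = π := by
    calc (π ^ n) ^ v = (π ^ (k : ℤ)) ^ u * (π ^ n) ^ v := by
          rw [hπkz, one_zpow, one_mul]
      _ = π ^ ((k : ℤ) * u + n * v) := by rw [zpow_add, zpow_mul, zpow_mul]
      _ = π := by rw [show (k : ℤ) * u + n * v = 1 by linarith, zpow_one]
  have hπB : π B = B := by
    rw [← hπeq]
    exact fix_zpow _ _ hfixB v
  exact hB ((hfix B).mp hπB)
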